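/- Let d ≥ 2, s₁, s₂ ∈ ℝ, 0 < p₁, p₂ < ∞, 0 < q₁ ≤ ∞ with p₁ ≠ q₁. Set α = p₁(s₂ − 1/p₂ − s₁ + 1/p₁) and β = α − p₁(d−1)/(q₁(d+1)). Then there exists C > 0, depending only on d, s₁, s₂, p₁, p₂ and q₁, such that for every Γ ⊂ 𝒬_AB with ν_β(Γ) < ∞, ‖ Σ_{P∈Γ} |Q_P|^{s₂ − 1/p₂ + 1/2} e_P ‖_{f^{s₁,q₁}_{p₁}(AB)} ≤ C ( ν_β(Γ) )^{1/p₁}. -/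

import Mathlib

open scoped ENNReal NNReal
open MeasureTheory

namespace Shear

/-- Index set `𝒬_AB` of the shearlet system: direction, scale, shear, translation. -/
structure Index (d : ℕ) where
  dir : Fin d
  j : ℕ
  l : Fin (d - 1) → ℤ
  k : Fin d → ℤ
  hl : ∀ i, |l i| ≤ 2 ^ j

/-- Lebesgue measure of the anisotropic cube `Q_P`, namely `2^{-j(d+1)}`. -/
noncomputable def cubeVol {d : ℕ} (P : Index d) : ℝ := (2 : ℝ) ^ (-(P.j : ℤ) * (d + 1))

/-- The inverse anisotropic dilation `A_(𝔡)^{-j}`. -/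
noncomputable def shearAinv (d : ℕ) (𝔡 : Fin d) (j : ℕ) : Matrix (Fin d) (Fin d) ℝ :=
  Matrix.diagonal fun i => if i = 𝔡 then (4 : ℝ) ^ (-(j : ℤ)) else (2 : ℝ) ^ (-(j : ℤ))

/-- The shear matrix `B_(𝔡)^{[ℓ]}`. -/
noncomputable def shearB (d : ℕ) (𝔡 : Fin d) (l : Fin (d - 1) → ℤ) : Matrix (Fin d) (Fin d) ℝ :=
  fun i c =>
    if hic : i = c then 1
    else if hi : i = 𝔡 then
      (if hc : (c : ℕ) < (𝔡 : ℕ) then (l ⟨c, by have := 𝔡.isLt; omega⟩ : ℝ)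
       else (l ⟨(c : ℕ) - 1, by
          have h1 : (𝔡 : ℕ) ≠ (c : ℕ) := fun h => hic (hi.trans (Fin.ext h))
          have := c.isLt; have := 𝔡.isLt; omega⟩ : ℝ))
    else 0

/-- The anisotropic cube `Q_P = A_(𝔡)^{-j} B_(𝔡)^{[-ℓ]} ([0,1)^d + k)`. -/
noncomputable def shearQ {d : ℕ} (P : Index d) : Set (Fin d → ℝ) :=
  (fun y => (shearAinv d P.dir P.j * shearB d P.dir fun i => -P.l i).mulVec y) ''
    {y : Fin d → ℝ | ∀ i, (P.k i : ℝ) ≤ y i ∧ y i < (P.k i : ℝ) + 1}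

/-- The measure `ν_β(Γ) = Σ_{P ∈ Γ} |Q_P|^β`. -/
noncomputable def nu {d : ℕ} (β : ℝ) (Γ : Set (Index d)) : ℝ≥0∞ :=
  ∑' P : Γ, ENNReal.ofReal (cubeVol (P : Index d) ^ β)

/-- The quasi-norm of the shear anisotropic inhomogeneous Besov sequence space `b^{s,q}_p(AB)`
(finite integrability parameters). -/
noncomputable def besovNorm {d : ℕ} (s p q : ℝ) (c : Index d → ℂ) : ℝ≥0∞ :=
  (∑' (𝔡 : Fin d) (j : ℕ) (l : {l : Fin (d - 1) → ℤ // ∀ i, |l i| ≤ 2 ^ j}),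
      (∑' k : Fin d → ℤ,
          (ENNReal.ofReal (((2 : ℝ) ^ (-(j : ℤ) * (d + 1))) ^ (-s + 1 / p - 1 / 2)) *
              (‖c ⟨𝔡, j, l.1, k, l.2⟩‖₊ : ℝ≥0∞)) ^ p) ^ (q / p)) ^ (1 / q)

/-- The quasi-norm of the shear anisotropic inhomogeneous Triebel–Lizorkin sequence space
`f^{s,q}_p(AB)`, `0 < q ≤ ∞`. -/
noncomputable def tlNorm {d : ℕ} (s p : ℝ) (q : ℝ≥0∞) (c : Index d → ℂ) : ℝ≥0∞ :=
  (∫⁻ x : Fin d → ℝ,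
      (if q = ∞ then
          ⨆ P : Index d,
            ENNReal.ofReal (cubeVol P ^ (-s - 1 / 2)) * (‖c P‖₊ : ℝ≥0∞) *
              (shearQ P).indicator (fun _ => (1 : ℝ≥0∞)) x
        else
          (∑' P : Index d,
              (ENNReal.ofReal (cubeVol P ^ (-s - 1 / 2)) * (‖c P‖₊ : ℝ≥0∞) *
                  (shearQ P).indicator (fun _ => (1 : ℝ≥0∞)) x) ^ q.toReal) ^ (1 / q.toReal)) ^ p)
    ^ (1 / p)

/-- Non-increasing rearrangement of a sequence with respect to a (set-function) measure `ν`. -/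
noncomputable def rearr {D : Type*} (ν : Set D → ℝ≥0∞) (c : D → ℂ) (t : ℝ≥0∞) : ℝ≥0∞ :=
  sInf {lam : ℝ≥0∞ | ν {I | lam < (‖c I‖₊ : ℝ≥0∞)} ≤ t}

/-- Quasi-norm of the weighted discrete Lorentz space `ℓ^{p,μ}(u,ν)`. -/
noncomputable def lorentzNorm {D : Type*} (ν : Set D → ℝ≥0∞) (u : D → ℝ) (p : ℝ) (μ : ℝ≥0∞)
    (c : D → ℂ) : ℝ≥0∞ :=
  if μ = ∞ then
    ⨆ t : {t : ℝ // 0 < t},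
      ENNReal.ofReal (t.1 ^ (1 / p)) * rearr ν (fun I => (u I : ℂ) * c I) (ENNReal.ofReal t.1)
  else
    (∫⁻ t in Set.Ioi (0 : ℝ),
        (ENNReal.ofReal (t ^ (1 / p)) *
              rearr ν (fun I => (u I : ℂ) * c I) (ENNReal.ofReal t)) ^ μ.toReal /
          ENNReal.ofReal t) ^ (1 / μ.toReal)

/-- `Σ_{t,ν}`: sequences supported on a set `Γ` with `ν(Γ) ≤ t`. -/
def SigmaSet {D : Type*} (ν : Set D → ℝ≥0∞) (t : ℝ≥0∞) : Set (D → ℂ) :=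
  {c | ∃ Γ : Set D, ν Γ ≤ t ∧ ∀ P ∉ Γ, c P = 0}

/-- Restricted approximation error `σ_ν(t,s)_𝔣`. -/
noncomputable def approxErr {D : Type*} (F : (D → ℂ) → ℝ≥0∞) (ν : Set D → ℝ≥0∞) (t : ℝ≥0∞)
    (s : D → ℂ) : ℝ≥0∞ :=
  ⨅ c ∈ SigmaSet ν t, F (fun P => s P - c P)

/-- Quasi-norm of the restricted approximation space `A^ξ_μ(𝔣,ν)`. -/
noncomputable def approxNorm {D : Type*} (F : (D → ℂ) → ℝ≥0∞) (ν : Set D → ℝ≥0∞) (ξ : ℝ)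
    (μ : ℝ≥0∞) (s : D → ℂ) : ℝ≥0∞ :=
  if μ = ∞ then
    ⨆ t : {t : ℝ // 0 < t}, ENNReal.ofReal (t.1 ^ ξ) * approxErr F ν (ENNReal.ofReal t.1) s
  else
    (∫⁻ t in Set.Ioi (0 : ℝ),
        (ENNReal.ofReal (t ^ ξ) * approxErr F ν (ENNReal.ofReal t) s) ^ μ.toReal /
          ENNReal.ofReal t) ^ (1 / μ.toReal)

/-- Peetre `K`-functional for a couple of quasi-normed sequence spaces. -/
noncomputable def Kfun {D : Type*} (X Y : (D → ℂ) → ℝ≥0∞) (t : ℝ≥0∞) (s : D → ℂ) : ℝ≥0∞ :=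
  ⨅ a : D → ℂ, X a + t * Y (fun P => s P - a P)

/-- Quasi-norm of the real interpolation space `(X,Y)_{θ,q}`. -/
noncomputable def interpNorm {D : Type*} (X Y : (D → ℂ) → ℝ≥0∞) (θ : ℝ) (q : ℝ≥0∞)
    (s : D → ℂ) : ℝ≥0∞ :=
  if q = ∞ then
    ⨆ t : {t : ℝ // 0 < t}, ENNReal.ofReal (t.1 ^ (-θ)) * Kfun X Y (ENNReal.ofReal t.1) s
  else
    (∫⁻ t in Set.Ioi (0 : ℝ),
        (ENNReal.ofReal (t ^ (-θ)) * Kfun X Y (ENNReal.ofReal t) s) ^ q.toReal /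
          ENNReal.ofReal t) ^ (1 / q.toReal)

end Shear

lemma tsum_rpow_le {ι : Type*} (f : ι → ℝ≥0∞) {t : ℝ} (h0 : 0 < t) (h1 : t ≤ 1) :
    (∑' i, f i) ^ t ≤ ∑' i, f i ^ t := by
  have key : ∀ s : Finset ι, (∑ i ∈ s, f i) ^ t ≤ ∑ i ∈ s, f i ^ t := by
    classical
    intro s
    induction s using Finset.induction with
    | empty => simp [ENNReal.zero_rpow_of_pos h0]
    | insert _ _ hx ih =>
        rw [Finset.sum_insert hx, Finset.sum_insert hx]
        exact le_trans (ENNReal.rpow_add_le_add_rpow _ _ h0.le h1) (by gcongr)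
  have : (∑' i, f i) ≤ (∑' i, f i ^ t) ^ t⁻¹ := by
    rw [ENNReal.tsum_eq_iSup_sum]
    refine iSup_le fun s => ?_
    have h2 : (∑ i ∈ s, f i) ^ t ≤ ∑' i, f i ^ t :=
      le_trans (key s) (ENNReal.sum_le_tsum s)
    calc ∑ i ∈ s, f i = ((∑ i ∈ s, f i) ^ t) ^ t⁻¹ := by
            rw [ENNReal.rpow_rpow_inv h0.ne']
      _ ≤ (∑' i, f i ^ t) ^ t⁻¹ := ENNReal.rpow_le_rpow h2 (by positivity)
  calc (∑' i, f i) ^ t ≤ ((∑' i, f i ^ t) ^ t⁻¹) ^ t :=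
        ENNReal.rpow_le_rpow this h0.le
    _ = ∑' i, f i ^ t := ENNReal.rpow_inv_rpow h0.ne' _

lemma tsum_le_of_subsingleton_support {ι : Type*} (f : ι → ℝ≥0∞) (c : ℝ≥0∞)
    (hle : ∀ i, f i ≤ c) (h : ∀ i j, f i ≠ 0 → f j ≠ 0 → i = j) : ∑' i, f i ≤ c := by
  by_cases he : ∃ i, f i ≠ 0
  · obtain ⟨i₀, hi₀⟩ := he
    rw [tsum_eq_single i₀ (fun b hb => by_contra fun hb' => hb (h b i₀ hb' hi₀))]
    exact hle i₀
  · push_neg at he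
    simp [he]

namespace Shear
variable {d : ℕ}

instance : MeasurableSpace (Index d) := ⊤
instance : MeasurableSingletonClass (Index d) := ⟨fun _ => trivial⟩
instance : Countable (Index d) :=
  Function.Injective.countable (f := fun P : Index d => (P.dir, P.j, P.l, P.k))
    (fun P Q h => by cases P; cases Q; simp_all)

lemma cubeVol_pos (P : Index d) : 0 < cubeVol P := by
  unfold cubeVol; positivity

lemma cubeVol_le_one (P : Index d) : cubeVol P ≤ 1 := by
  unfold cubeVol
  apply zpow_le_one_of_nonpos₀ (by norm_num)
  rw [neg_mul]
  exact neg_nonpos.mpr (by positivity)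

lemma cubeVol_rpow_le (P : Index d) {a b : ℝ} (h : b ≤ a) : cubeVol P ^ a ≤ cubeVol P ^ b :=
  Real.rpow_le_rpow_of_exponent_ge (cubeVol_pos P) (cubeVol_le_one P) h

end Shear

namespace Shear
variable {d : ℕ}

lemma shearB_det (𝔡 : Fin d) (l : Fin (d-1) → ℤ) : (shearB d 𝔡 l).det = 1 := by
  classical
  set v : Fin d → ℝ := fun c => shearB d 𝔡 l 𝔡 c with hv
  have hv𝔡 : v 𝔡 = 1 := by simp [hv, shearB]
  have hB : shearB d 𝔡 l = Matrix.updateRow 1 𝔡 v := by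
    ext i c
    by_cases hi : i = 𝔡
    · subst hi; rw [Matrix.updateRow_self]
    · rw [Matrix.updateRow_ne hi]
      by_cases hic : i = c
      · subst hic; simp [shearB, Matrix.one_apply]
      · simp [shearB, hic, hi, Matrix.one_apply]
  set w : Fin d → ℝ := fun c => if c = 𝔡 then 0 else v c with hw
  have hvw : v = (1 : Matrix (Fin d) (Fin d) ℝ) 𝔡 + w := by
    funext c
    by_cases hc : c = 𝔡
    · subst hc; simp [hw, hv𝔡, Matrix.one_apply]
    · simp [hw, hc, Matrix.one_apply]
      exact fun h => hc h.symm
  have hzero : Matrix.det (Matrix.updateRow (1 : Matrix (Fin d) (Fin d) ℝ) 𝔡 w) = 0 := by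
    apply Matrix.det_eq_zero_of_column_eq_zero 𝔡
    intro i
    by_cases hi : i = 𝔡
    · subst hi; simp [hw]
    · rw [Matrix.updateRow_ne hi]; simp [Matrix.one_apply, hi]
  rw [hB, hvw, Matrix.det_updateRow_add, Matrix.updateRow_eq_self, Matrix.det_one, hzero,
    add_zero]

lemma shearAinv_det (𝔡 : Fin d) (j : ℕ) :
    (shearAinv d 𝔡 j).det = (2 : ℝ) ^ (-(j : ℤ) * (d + 1)) := by
  classical
  have hd1 : 1 ≤ d := 𝔡.pos
  rw [shearAinv, Matrix.det_diagonal]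
  rw [← Finset.mul_prod_erase Finset.univ _ (Finset.mem_univ 𝔡)]
  rw [if_pos rfl]
  have h2 : ∏ i ∈ Finset.univ.erase 𝔡,
      (if i = 𝔡 then (4 : ℝ) ^ (-(j : ℤ)) else (2 : ℝ) ^ (-(j : ℤ)))
      = ((2 : ℝ) ^ (-(j : ℤ))) ^ (d - 1) := by
    rw [Finset.prod_congr rfl (fun i hi => if_neg (Finset.mem_erase.mp hi).1),
      Finset.prod_const, Finset.card_erase_of_mem (Finset.mem_univ 𝔡), Finset.card_univ,
      Fintype.card_fin]
  rw [h2, show ((4:ℝ)) = (2:ℝ)^(2:ℤ) by norm_num, ← zpow_mul,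
    ← zpow_natCast ((2:ℝ)^(-(j:ℤ))) (d-1), ← zpow_mul,
    ← zpow_add₀ (by norm_num : (2:ℝ) ≠ 0)]
  congr 1
  push_cast [hd1]
  ring

lemma cubeMatrix_det (P : Index d) :
    (shearAinv d P.dir P.j * shearB d P.dir fun i => -P.l i).det = cubeVol P := by
  rw [Matrix.det_mul, shearB_det, shearAinv_det, mul_one, cubeVol]

lemma box_eq (k : Fin d → ℤ) :
    {y : Fin d → ℝ | ∀ i, (k i : ℝ) ≤ y i ∧ y i < (k i : ℝ) + 1}
      = Set.pi Set.univ (fun i => Set.Ico (k i : ℝ) ((k i : ℝ) + 1)) := by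
  ext y; simp [Set.mem_pi, Set.mem_Ico]

lemma volume_box (k : Fin d → ℤ) :
    volume {y : Fin d → ℝ | ∀ i, (k i : ℝ) ≤ y i ∧ y i < (k i : ℝ) + 1} = 1 := by
  rw [box_eq, MeasureTheory.volume_pi_pi]
  simp

lemma volume_shearQ (P : Index d) : volume (shearQ P) = ENNReal.ofReal (cubeVol P) := by
  rw [shearQ]
  have h1 : (fun y : Fin d → ℝ =>
      (shearAinv d P.dir P.j * shearB d P.dir fun i => -P.l i).mulVec y)
      = (Matrix.toLin' (shearAinv d P.dir P.j * shearB d P.dir fun i => -P.l i)) := by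
    funext y; simp [Matrix.toLin'_apply]
  rw [h1, MeasureTheory.Measure.addHaar_image_linearMap, LinearMap.det_toLin',
    cubeMatrix_det, volume_box, mul_one, abs_of_pos (cubeVol_pos P)]

end Shear

namespace Shear
variable {d : ℕ}

lemma measurableSet_box (k : Fin d → ℤ) :
    MeasurableSet {y : Fin d → ℝ | ∀ i, (k i : ℝ) ≤ y i ∧ y i < (k i : ℝ) + 1} := by
  rw [box_eq]
  exact MeasurableSet.univ_pi (fun i => measurableSet_Ico)

lemma shearQ_eq_image (P : Index d) :
    shearQ P = (Matrix.toLin' (shearAinv d P.dir P.j * shearB d P.dir fun i => -P.l i)) ''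
      {y : Fin d → ℝ | ∀ i, (P.k i : ℝ) ≤ y i ∧ y i < (P.k i : ℝ) + 1} := by
  rw [shearQ]
  congr 1

lemma measurableSet_shearQ (P : Index d) : MeasurableSet (shearQ P) := by
  rw [shearQ_eq_image]
  set f := Matrix.toLin' (shearAinv d P.dir P.j * shearB d P.dir fun i => -P.l i) with hf
  have hdet : LinearMap.det f ≠ 0 := by
    rw [hf, LinearMap.det_toLin', cubeMatrix_det]
    exact (cubeVol_pos P).ne'
  let e := (LinearMap.equivOfDetNeZero f hdet).toContinuousLinearEquiv
  have hfe : ⇑f = ⇑e := rfl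
  rw [hfe, ContinuousLinearEquiv.image_eq_preimage_symm]
  exact (measurableSet_box P.k).preimage (e.symm.continuous.measurable)

lemma shearQ_k_unique {𝔡 : Fin d} {j : ℕ} {l : Fin (d-1) → ℤ} {hl hl' : ∀ i, |l i| ≤ 2 ^ j}
    {k k' : Fin d → ℤ} {x : Fin d → ℝ}
    (h : x ∈ shearQ ⟨𝔡, j, l, k, hl⟩) (h' : x ∈ shearQ ⟨𝔡, j, l, k', hl'⟩) : k = k' := by
  obtain ⟨y, hy, hxy⟩ := h
  obtain ⟨y', hy', hxy'⟩ := h'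
  have hinj : Function.Injective
      (shearAinv d 𝔡 j * shearB d 𝔡 fun i => -l i).mulVec := by
    rw [Matrix.mulVec_injective_iff_isUnit, Matrix.isUnit_iff_isUnit_det]
    refine isUnit_iff_ne_zero.mpr ?_
    have := cubeMatrix_det (⟨𝔡, j, l, k, hl⟩ : Index d)
    simp only at this
    rw [this]
    exact (cubeVol_pos _).ne'
  have hyy : y = y' := hinj (hxy.trans hxy'.symm)
  subst hyy
  funext i
  have h1 := hy i
  have h2 := hy' i
  have e1 : ⌊y i⌋ = k i := Int.floor_eq_iff.mpr ⟨h1.1, by push_cast; exact h1.2⟩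
  have e2 : ⌊y i⌋ = k' i := Int.floor_eq_iff.mpr ⟨h2.1, by push_cast; exact h2.2⟩
  rw [← e1, e2]

/-- Decomposition of the index set as an iterated sigma type. -/
def indexEquiv (d : ℕ) :
    Index d ≃ Σ (_ : Fin d) (j : ℕ), {l : Fin (d-1) → ℤ // ∀ i, |l i| ≤ 2 ^ j} × (Fin d → ℤ) where
  toFun P := ⟨P.dir, P.j, ⟨⟨P.l, P.hl⟩, P.k⟩⟩
  invFun t := ⟨t.1, t.2.1, t.2.2.1.1, t.2.2.2, t.2.2.1.2⟩
  left_inv P := rfl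
  right_inv t := rfl

end Shear

namespace Shear
variable {d : ℕ}

lemma indicator_le_one (s : Set (Fin d → ℝ)) (x : Fin d → ℝ) :
    s.indicator (fun _ => (1:ℝ≥0∞)) x ≤ 1 := by
  classical
  by_cases hx : x ∈ s <;> simp [hx]

lemma overlap_bound (hd : 1 ≤ d) {γ : ℝ} (hγ : (d:ℝ) - 1 < ((d:ℝ)+1)*γ) :
    ∃ A : ℝ≥0∞, A ≠ ∞ ∧ ∀ x : Fin d → ℝ,
      (∑' P : Index d, ENNReal.ofReal (cubeVol P ^ γ) *
        (shearQ P).indicator (fun _ => (1:ℝ≥0∞)) x) ≤ A := by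
  classical
  set X : ℝ := (d:ℝ) - 1 - ((d:ℝ)+1)*γ with hX
  have hXneg : X < 0 := by rw [hX]; linarith
  have h2zero : (2:ℝ≥0∞) ≠ 0 := by norm_num
  have h2top : (2:ℝ≥0∞) ≠ ∞ := by norm_num
  have hr1 : (2:ℝ≥0∞) ^ X < 1 := ENNReal.rpow_lt_one_of_one_lt_of_neg (by norm_num) hXneg
  have hsub : (1 : ℝ≥0∞) - (2:ℝ≥0∞)^X ≠ 0 := by
    simpa [tsub_eq_zero_iff_le] using hr1.not_ge
  refine ⟨(d : ℝ≥0∞) * ((2:ℝ≥0∞) ^ (((2*(d-1) : ℕ)) : ℝ) * (1 - (2:ℝ≥0∞)^X)⁻¹), ?_, ?_⟩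
  · exact ENNReal.mul_ne_top (by simp)
      (ENNReal.mul_ne_top (ENNReal.rpow_ne_top_of_nonneg (by positivity) h2top)
        (ENNReal.inv_ne_top.mpr hsub))
  intro x
  set w : ℕ → ℝ≥0∞ := fun j => ENNReal.ofReal (((2:ℝ)^(-(j:ℤ)*((d:ℤ)+1)))^γ) with hwdef
  -- rewrite the tsum through the sigma-decomposition
  have hre : (∑' P : Index d, ENNReal.ofReal (cubeVol P ^ γ) *
        (shearQ P).indicator (fun _ => (1:ℝ≥0∞)) x)
      = ∑' (𝔡 : Fin d) (j : ℕ)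
          (l : {l : Fin (d-1) → ℤ // ∀ i, |l i| ≤ 2 ^ j}) (k : Fin d → ℤ),
          w j * (shearQ ⟨𝔡, j, l.1, k, l.2⟩).indicator (fun _ => (1:ℝ≥0∞)) x := by
    rw [← Equiv.tsum_eq (indexEquiv d).symm, ENNReal.tsum_sigma']
    congr 1; funext 𝔡
    rw [ENNReal.tsum_sigma']
    congr 1; funext j
    rw [ENNReal.tsum_prod']
    rfl
  rw [hre]
  -- bound the innermost sum over k
  have hk : ∀ (𝔡 : Fin d) (j : ℕ) (l : {l : Fin (d-1) → ℤ // ∀ i, |l i| ≤ 2 ^ j}),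
      (∑' k : Fin d → ℤ,
        w j * (shearQ ⟨𝔡, j, l.1, k, l.2⟩).indicator (fun _ => (1:ℝ≥0∞)) x) ≤ w j := by
    intro 𝔡 j l
    apply tsum_le_of_subsingleton_support
    · intro k
      calc w j * (shearQ ⟨𝔡, j, l.1, k, l.2⟩).indicator (fun _ => (1:ℝ≥0∞)) x
          ≤ w j * 1 := mul_le_mul_right (indicator_le_one _ _) _
        _ = w j := mul_one _
    · intro k k' h1 h2
      have hx1 : x ∈ shearQ ⟨𝔡, j, l.1, k, l.2⟩ := by
        by_contra hx
        simp [Set.indicator_of_notMem hx] at h1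
      have hx2 : x ∈ shearQ ⟨𝔡, j, l.1, k', l.2⟩ := by
        by_contra hx
        simp [Set.indicator_of_notMem hx] at h2
      exact shearQ_k_unique hx1 hx2
  -- bound the sum over l by a cardinality count
  have hl : ∀ (j : ℕ),
      (∑' _ : {l : Fin (d-1) → ℤ // ∀ i, |l i| ≤ 2 ^ j}, w j)
        ≤ ((2:ℝ≥0∞) ^ ((j+2)*(d-1) : ℕ)) * w j := by
    intro j
    have φinj : Function.Injective
        (fun l : {l : Fin (d-1) → ℤ // ∀ i, |l i| ≤ 2 ^ j} =>
          (fun i => ⟨l.1 i, Finset.mem_Icc.mpr (abs_le.mp (l.2 i))⟩ :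
            Fin (d-1) → Finset.Icc (-(2^j) : ℤ) (2^j))) := by
      intro l l' h
      apply Subtype.ext
      funext i
      exact congrArg Subtype.val (congrFun h i)
    calc (∑' _ : {l : Fin (d-1) → ℤ // ∀ i, |l i| ≤ 2 ^ j}, w j)
        ≤ ∑' _ : (Fin (d-1) → Finset.Icc (-(2^j) : ℤ) (2^j)), w j :=
            ENNReal.tsum_comp_le_tsum_of_injective φinj (fun _ => w j)
      _ = (Fintype.card (Fin (d-1) → Finset.Icc (-(2^j) : ℤ) (2^j))) • w j := by
            rw [tsum_fintype, Finset.sum_const, Finset.card_univ]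
      _ = ((Fintype.card (Fin (d-1) → Finset.Icc (-(2^j) : ℤ) (2^j)) : ℕ) : ℝ≥0∞) * w j := by
            rw [nsmul_eq_mul]
      _ ≤ ((2:ℝ≥0∞) ^ ((j+2)*(d-1) : ℕ)) * w j := by
          gcongr
          have hcT : Fintype.card (Fin (d-1) → Finset.Icc (-(2^j) : ℤ) (2^j))
              = (2^(j+1)+1)^(d-1) := by
            rw [Fintype.card_fun, Fintype.card_coe, Int.card_Icc, Fintype.card_fin]
            congr 1
            have he : ((2:ℤ)^j + 1 - -(2^j)) = (((2^(j+1)+1 : ℕ)) : ℤ) := by push_cast; ring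
            rw [he, Int.toNat_natCast]
          rw [hcT]
          have hle : (2^(j+1)+1 : ℕ) ≤ 2^(j+2) := by
            have := Nat.one_le_two_pow (n := j+1)
            have e : (2:ℕ)^(j+2) = 2 * 2^(j+1) := by ring
            omega
          calc ((((2:ℕ)^(j+1)+1)^(d-1) : ℕ) : ℝ≥0∞)
              ≤ (((2:ℕ)^(j+2))^(d-1) : ℕ) := by
                exact_mod_cast Nat.pow_le_pow_left hle (d-1)
            _ = (2:ℝ≥0∞) ^ ((j+2)*(d-1) : ℕ) := by push_cast [← pow_mul]; norm_num
  -- identify the resulting scale factor with a geometric term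
  have hgeom : ∀ j : ℕ,
      ((2:ℝ≥0∞) ^ ((j+2)*(d-1) : ℕ)) * w j
        = (2:ℝ≥0∞) ^ (((2*(d-1) : ℕ)) : ℝ) * ((2:ℝ≥0∞)^X)^j := by
    intro j
    have hw : w j = (2:ℝ≥0∞) ^ ((-(j:ℝ) * ((d:ℝ)+1)) * γ) := by
      show ENNReal.ofReal (((2:ℝ)^(-(j:ℤ)*((d:ℤ)+1)))^γ) = _
      rw [show ((2:ℝ)^(-(j:ℤ)*((d:ℤ)+1))) = (2:ℝ) ^ (((-(j:ℤ)*((d:ℤ)+1) : ℤ)) : ℝ) from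
        (Real.rpow_intCast 2 _).symm,
        ← Real.rpow_mul (by norm_num), ← ENNReal.ofReal_rpow_of_pos (by norm_num : (0:ℝ) < 2),
        show ENNReal.ofReal 2 = 2 from by norm_num]
      congr 1
      push_cast
      ring
    rw [hw, show ((2:ℝ≥0∞) ^ ((j+2)*(d-1) : ℕ)) = (2:ℝ≥0∞) ^ ((((j+2)*(d-1) : ℕ)) : ℝ) from
      (ENNReal.rpow_natCast _ _).symm, ← ENNReal.rpow_add _ _ h2zero h2top,
      ← ENNReal.rpow_natCast ((2:ℝ≥0∞)^X) j, ← ENNReal.rpow_mul,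
      ← ENNReal.rpow_add _ _ h2zero h2top]
    congr 1
    push_cast [Nat.cast_sub hd]
    rw [hX]
    ring
  calc (∑' (𝔡 : Fin d) (j : ℕ)
          (l : {l : Fin (d-1) → ℤ // ∀ i, |l i| ≤ 2 ^ j}) (k : Fin d → ℤ),
          w j * (shearQ ⟨𝔡, j, l.1, k, l.2⟩).indicator (fun _ => (1:ℝ≥0∞)) x)
      ≤ ∑' (𝔡 : Fin d) (j : ℕ), ((2:ℝ≥0∞) ^ ((j+2)*(d-1) : ℕ)) * w j := by
        gcongr with 𝔡 j
        exact le_trans (ENNReal.tsum_le_tsum (fun l => hk 𝔡 j l)) (hl j)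
    _ = ∑' (_ : Fin d), (2:ℝ≥0∞) ^ (((2*(d-1) : ℕ)) : ℝ) * ∑' j : ℕ, ((2:ℝ≥0∞)^X)^j := by
        congr 1; funext 𝔡
        rw [← ENNReal.tsum_mul_left]
        congr 1; funext j
        exact hgeom j
    _ = (d : ℝ≥0∞) * ((2:ℝ≥0∞) ^ (((2*(d-1) : ℕ)) : ℝ) * (1 - (2:ℝ≥0∞)^X)⁻¹) := by
        rw [ENNReal.tsum_geometric, tsum_fintype, Finset.sum_const, Finset.card_univ,
          Fintype.card_fin, nsmul_eq_mul]

end Shear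

namespace Shear
variable {d : ℕ}

lemma lintegral_tsum_indicator (h : Index d → ℝ≥0∞) :
    (∫⁻ x : Fin d → ℝ, ∑' P : Index d, (shearQ P).indicator (fun _ => h P) x)
      = ∑' P : Index d, h P * ENNReal.ofReal (cubeVol P) := by
  rw [lintegral_tsum
    (fun P => (measurable_const.indicator (measurableSet_shearQ P)).aemeasurable)]
  congr 1
  funext P
  rw [lintegral_indicator (measurableSet_shearQ P), MeasureTheory.setLIntegral_const,
    volume_shearQ]

lemma indicator_rpow (s : Set (Fin d → ℝ)) (c : ℝ≥0∞) (x : Fin d → ℝ) {t : ℝ} (ht : 0 < t) :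
    (s.indicator (fun _ => c) x) ^ t = s.indicator (fun _ => c ^ t) x := by
  classical
  by_cases hx : x ∈ s <;> simp [hx, ENNReal.zero_rpow_of_pos ht]

lemma indicator_mul_indicator (s : Set (Fin d → ℝ)) (a b : ℝ≥0∞) (x : Fin d → ℝ) :
    (s.indicator (fun _ => a) x) * (s.indicator (fun _ => b) x) = s.indicator (fun _ => a*b) x := by
  classical
  by_cases hx : x ∈ s <;> simp [hx]

/-- Comparison of the weighted tsum with `ν_β`. -/
lemma tsum_indicator_le_nu (Γ : Set (Index d)) {E β : ℝ} (hE : β ≤ E) :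
    (∑' P : Index d, Γ.indicator (fun P => ENNReal.ofReal (cubeVol P ^ E)) P) ≤ nu β Γ := by
  rw [nu, tsum_subtype Γ (fun P => ENNReal.ofReal (cubeVol P ^ β))]
  refine ENNReal.tsum_le_tsum (fun P => ?_)
  classical
  by_cases hP : P ∈ Γ
  · simp only [Set.indicator_of_mem hP]
    exact ENNReal.ofReal_le_ofReal (cubeVol_rpow_le P hE)
  · simp [Set.indicator_of_notMem hP]

end Shear

namespace Shear
variable {d : ℕ}

lemma term_eq (Γ : Set (Index d)) (s₁ s₂ p₂ : ℝ) (P : Index d) (x : Fin d → ℝ) :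
    ENNReal.ofReal (cubeVol P ^ (-s₁ - 1/2)) *
      (‖Set.indicator Γ (fun P => ((cubeVol P ^ (s₂ - 1/p₂ + 1/2) : ℝ) : ℂ)) P‖₊ : ℝ≥0∞) *
      (shearQ P).indicator (fun _ => (1:ℝ≥0∞)) x
    = (shearQ P).indicator
        (fun _ => Γ.indicator
          (fun P => ENNReal.ofReal (cubeVol P ^ (s₂ - 1/p₂ - s₁))) P) x := by
  classical
  by_cases hP : P ∈ Γ
  · by_cases hx : x ∈ shearQ P
    · simp only [Set.indicator_of_mem hP, Set.indicator_of_mem hx, mul_one]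
      have h1 : ((‖((cubeVol P ^ (s₂ - 1/p₂ + 1/2) : ℝ) : ℂ)‖₊ : ℝ≥0∞))
          = ENNReal.ofReal (cubeVol P ^ (s₂ - 1/p₂ + 1/2)) := by
        rw [Complex.nnnorm_real]
        exact Real.enorm_eq_ofReal (Real.rpow_pos_of_pos (cubeVol_pos P) _).le
      rw [h1, ← ENNReal.ofReal_mul (Real.rpow_pos_of_pos (cubeVol_pos P) _).le,
        ← Real.rpow_add (cubeVol_pos P)]
      congr 1
      ring
    · simp [Set.indicator_of_notMem hx]
  · simp [Set.indicator_of_notMem hP]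

end Shear

/-- Upper democracy of Theorem 3.2: with `α = p₁(s₂−1/p₂−s₁+1/p₁)` and
`β = α − p₁(d−1)/(q₁(d+1))`, `‖Σ_{P∈Γ} e_P/‖e_P‖_{f₂}‖_{f^{s₁,q₁}_{p₁}(AB)} ≤ C ν_β(Γ)^{1/p₁}`
whenever `ν_β(Γ) < ∞`. -/
theorem tl_upper_democracy (d : ℕ) (hd : 2 ≤ d) (s₁ s₂ p₁ p₂ : ℝ)
    (hp₁ : 0 < p₁) (hp₂ : 0 < p₂) (q₁ : ℝ≥0∞) (hq₁ : 0 < q₁)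
    (hpq : q₁ ≠ ENNReal.ofReal p₁) :
    ∃ C : ℝ, 0 < C ∧ ∀ Γ : Set (Shear.Index d),
      Shear.nu (p₁ * (s₂ - 1 / p₂ - s₁ + 1 / p₁)
          - p₁ * ((d : ℝ) - 1) / (q₁.toReal * ((d : ℝ) + 1))) Γ < ∞ →
      Shear.tlNorm s₁ p₁ q₁
          (Set.indicator Γ fun P => ((Shear.cubeVol P ^ (s₂ - 1 / p₂ + 1 / 2) : ℝ) : ℂ)) ≤
        ENNReal.ofReal C *
          Shear.nu (p₁ * (s₂ - 1 / p₂ - s₁ + 1 / p₁)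
            - p₁ * ((d : ℝ) - 1) / (q₁.toReal * ((d : ℝ) + 1))) Γ ^ (1 / p₁) := by
  classical
  set δ : ℝ := s₂ - 1 / p₂ - s₁ with hδ
  set β : ℝ := p₁ * (δ + 1 / p₁) - p₁ * ((d : ℝ) - 1) / (q₁.toReal * ((d : ℝ) + 1)) with hβ
  have hdR : (2:ℝ) ≤ (d:ℝ) := by exact_mod_cast hd
  have hsub_nonneg : 0 ≤ p₁ * ((d : ℝ) - 1) / (q₁.toReal * ((d : ℝ) + 1)) :=
    div_nonneg (mul_nonneg hp₁.le (by linarith)) (mul_nonneg ENNReal.toReal_nonneg (by positivity))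
  have hexp : p₁ * (δ + 1/p₁) = δ * p₁ + 1 := by field_simp
  have hβle : β ≤ δ * p₁ + 1 := by rw [hβ, hexp]; linarith
  by_cases hqt : q₁ = ∞
  · -- the `q = ∞` case: `C = 1`
    refine ⟨1, one_pos, fun Γ _ => ?_⟩
    simp only [ENNReal.ofReal_one, one_mul]
    simp only [Shear.tlNorm, if_pos hqt]
    refine ENNReal.rpow_le_rpow ?_ (by positivity)
    set g : Shear.Index d → ℝ≥0∞ :=
      Γ.indicator (fun P => ENNReal.ofReal (Shear.cubeVol P ^ δ)) with hg
    calc (∫⁻ x : Fin d → ℝ, (⨆ P : Shear.Index d,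
            ENNReal.ofReal (Shear.cubeVol P ^ (-s₁ - 1 / 2)) *
              (‖Set.indicator Γ (fun P => ((Shear.cubeVol P ^ (s₂ - 1/p₂ + 1/2) : ℝ) : ℂ)) P‖₊ : ℝ≥0∞) *
              (Shear.shearQ P).indicator (fun _ => (1:ℝ≥0∞)) x) ^ p₁)
        ≤ ∫⁻ x : Fin d → ℝ, ∑' P : Shear.Index d,
            (Shear.shearQ P).indicator (fun _ => g P ^ p₁) x := by
          apply lintegral_mono
          intro x
          have hsup : (⨆ P : Shear.Index d,
              ENNReal.ofReal (Shear.cubeVol P ^ (-s₁ - 1 / 2)) *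
                (‖Set.indicator Γ (fun P => ((Shear.cubeVol P ^ (s₂ - 1/p₂ + 1/2) : ℝ) : ℂ)) P‖₊ : ℝ≥0∞) *
                (Shear.shearQ P).indicator (fun _ => (1:ℝ≥0∞)) x)
              ≤ (∑' P : Shear.Index d, (Shear.shearQ P).indicator (fun _ => g P ^ p₁) x) ^ p₁⁻¹ := by
            refine iSup_le fun P => ?_
            rw [Shear.term_eq Γ s₁ s₂ p₂ P x]
            calc (Shear.shearQ P).indicator (fun _ => g P) x
                = (((Shear.shearQ P).indicator (fun _ => g P) x) ^ p₁) ^ p₁⁻¹ :=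
                  (ENNReal.rpow_rpow_inv hp₁.ne' _).symm
              _ ≤ (∑' P : Shear.Index d, (Shear.shearQ P).indicator (fun _ => g P ^ p₁) x) ^ p₁⁻¹ := by
                  refine ENNReal.rpow_le_rpow ?_ (by positivity)
                  rw [Shear.indicator_rpow _ _ _ hp₁]
                  exact ENNReal.le_tsum P
          calc (⨆ P : Shear.Index d, _) ^ p₁
              ≤ ((∑' P : Shear.Index d, (Shear.shearQ P).indicator (fun _ => g P ^ p₁) x) ^ p₁⁻¹) ^ p₁ :=
                ENNReal.rpow_le_rpow hsup hp₁.le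
            _ = ∑' P : Shear.Index d, (Shear.shearQ P).indicator (fun _ => g P ^ p₁) x :=
                ENNReal.rpow_inv_rpow hp₁.ne' _
      _ = ∑' P : Shear.Index d, g P ^ p₁ * ENNReal.ofReal (Shear.cubeVol P) :=
          Shear.lintegral_tsum_indicator _
      _ ≤ ∑' P : Shear.Index d,
            Γ.indicator (fun P => ENNReal.ofReal (Shear.cubeVol P ^ (δ * p₁ + 1))) P := by
          refine ENNReal.tsum_le_tsum fun P => ?_
          by_cases hP : P ∈ Γ
          · simp only [hg, Set.indicator_of_mem hP]
            rw [ENNReal.ofReal_rpow_of_pos (Real.rpow_pos_of_pos (Shear.cubeVol_pos P) _),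
              ← ENNReal.ofReal_mul
                (Real.rpow_pos_of_pos (Real.rpow_pos_of_pos (Shear.cubeVol_pos P) δ) p₁).le]
            apply le_of_eq
            congr 1
            rw [← Real.rpow_mul (Shear.cubeVol_pos P).le,
              Real.rpow_add (Shear.cubeVol_pos P), Real.rpow_one]
          · simp [hg, Set.indicator_of_notMem hP, ENNReal.zero_rpow_of_pos hp₁]
      _ ≤ Shear.nu β Γ := Shear.tsum_indicator_le_nu Γ hβle
  · -- `q₁` finite
    have hq0 : 0 < q₁.toReal := ENNReal.toReal_pos hq₁.ne' hqt
    rcases le_or_gt p₁ q₁.toReal with hple | hplt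
    · -- `p₁ ≤ q` : `C = 1`
      refine ⟨1, one_pos, fun Γ _ => ?_⟩
      simp only [ENNReal.ofReal_one, one_mul]
      simp only [Shear.tlNorm, if_neg hqt]
      refine ENNReal.rpow_le_rpow ?_ (by positivity)
      set g : Shear.Index d → ℝ≥0∞ :=
        Γ.indicator (fun P => ENNReal.ofReal (Shear.cubeVol P ^ δ)) with hg
      calc (∫⁻ x : Fin d → ℝ, ((∑' P : Shear.Index d,
              (ENNReal.ofReal (Shear.cubeVol P ^ (-s₁ - 1 / 2)) *
                (‖Set.indicator Γ
                  (fun P => ((Shear.cubeVol P ^ (s₂ - 1/p₂ + 1/2) : ℝ) : ℂ)) P‖₊ : ℝ≥0∞) *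
                (Shear.shearQ P).indicator (fun _ => (1:ℝ≥0∞)) x) ^ q₁.toReal)
              ^ (1/q₁.toReal)) ^ p₁)
          ≤ ∫⁻ x : Fin d → ℝ, ∑' P : Shear.Index d,
              (Shear.shearQ P).indicator (fun _ => g P ^ p₁) x := by
            apply lintegral_mono
            intro x
            simp only [Shear.term_eq Γ s₁ s₂ p₂]
            rw [← ENNReal.rpow_mul]
            calc (∑' P : Shear.Index d,
                  ((Shear.shearQ P).indicator (fun _ => g P) x) ^ q₁.toReal)
                  ^ (1/q₁.toReal * p₁)
                ≤ ∑' P : Shear.Index d,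
                    (((Shear.shearQ P).indicator (fun _ => g P) x) ^ q₁.toReal)
                      ^ (1/q₁.toReal * p₁) := by
                  apply tsum_rpow_le
                  · exact mul_pos (div_pos one_pos hq0) hp₁
                  · rw [div_mul_eq_mul_div, one_mul, div_le_one hq0]
                    exact hple
              _ = ∑' P : Shear.Index d, (Shear.shearQ P).indicator (fun _ => g P ^ p₁) x := by
                  congr 1
                  funext P
                  rw [← ENNReal.rpow_mul,
                    show q₁.toReal * (1/q₁.toReal * p₁) = p₁ from by field_simp,
                    Shear.indicator_rpow _ _ _ hp₁]
        _ = ∑' P : Shear.Index d, g P ^ p₁ * ENNReal.ofReal (Shear.cubeVol P) :=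
            Shear.lintegral_tsum_indicator _
        _ ≤ ∑' P : Shear.Index d,
              Γ.indicator (fun P => ENNReal.ofReal (Shear.cubeVol P ^ (δ * p₁ + 1))) P := by
            refine ENNReal.tsum_le_tsum fun P => ?_
            by_cases hP : P ∈ Γ
            · simp only [hg, Set.indicator_of_mem hP]
              rw [ENNReal.ofReal_rpow_of_pos (Real.rpow_pos_of_pos (Shear.cubeVol_pos P) _),
                ← ENNReal.ofReal_mul
                  (Real.rpow_pos_of_pos (Real.rpow_pos_of_pos (Shear.cubeVol_pos P) δ) p₁).le]
              apply le_of_eq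
              congr 1
              rw [← Real.rpow_mul (Shear.cubeVol_pos P).le,
                Real.rpow_add (Shear.cubeVol_pos P), Real.rpow_one]
            · simp [hg, Set.indicator_of_notMem hP, ENNReal.zero_rpow_of_pos hp₁]
        _ ≤ Shear.nu β Γ := Shear.tsum_indicator_le_nu Γ hβle
    · -- `q < p₁` : Hölder case
      set q : ℝ := q₁.toReal with hqdef
      set r : ℝ := p₁ / q with hrdef
      have hr1 : 1 < r := (one_lt_div hq0).mpr hplt
      have hr0 : 0 < r := lt_trans one_pos hr1
      have hrm1 : 0 < r - 1 := by linarith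
      set r' : ℝ := r / (r - 1) with hr'def
      have hconj : r.HolderConjugate r' := Real.HolderConjugate.conjExponent hr1
      have hr'0 : 0 < r' := div_pos hr0 hrm1
      set m : ℝ := ((d:ℝ)-1)/((d:ℝ)+1) with hmdef
      have hm0 : 0 < m := div_pos (by linarith) (by positivity)
      set γ : ℝ := m*(1 + r/(r-1))/2 with hγdef
      have hrr : 1 < r/(r-1) := by rw [lt_div_iff₀ hrm1]; linarith
      have hγm : m < γ := by rw [hγdef]; nlinarith
      have hγrm : γ*(r-1) ≤ r*m := by
        have expand : γ*(r-1) = m*((r-1) + r)/2 := by rw [hγdef]; field_simp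
        rw [expand]; nlinarith
      have hγ1 : (d:ℝ) - 1 < ((d:ℝ)+1)*γ := by
        have hdm : ((d:ℝ)+1)*m = (d:ℝ)-1 := by rw [hmdef]; field_simp
        nlinarith [hγm, show (0:ℝ) < (d:ℝ)+1 by positivity]
      obtain ⟨A, hAtop, hA⟩ := Shear.overlap_bound (d := d) (by omega) hγ1
      set K : ℝ≥0∞ := (A ^ (r-1)) ^ (1/p₁) with hKdef
      have hArm1 : A ^ (r-1) ≠ ∞ := ENNReal.rpow_ne_top_of_nonneg (by linarith) hAtop
      have hKtop : K ≠ ∞ := ENNReal.rpow_ne_top_of_nonneg (by positivity) hArm1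
      refine ⟨K.toReal + 1, by positivity, fun Γ _ => ?_⟩
      have hofC : K ≤ ENNReal.ofReal (K.toReal + 1) := by
        conv_lhs => rw [← ENNReal.ofReal_toReal hKtop]
        exact ENNReal.ofReal_le_ofReal (by linarith)
      set g : Shear.Index d → ℝ≥0∞ :=
        Γ.indicator (fun P => ENNReal.ofReal (Shear.cubeVol P ^ δ)) with hg
      have hβle2 : β ≤ δ * p₁ - γ*(r-1) + 1 := by
        have hsub_eq : p₁ * ((d : ℝ) - 1) / (q₁.toReal * ((d : ℝ) + 1)) = r * m := by
          rw [hrdef, hmdef, hqdef]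
          field_simp
        rw [hβ, hexp, hsub_eq]
        linarith
      -- pointwise Hölder bound
      have hpoint : ∀ x : Fin d → ℝ,
          ((∑' P : Shear.Index d, ((Shear.shearQ P).indicator (fun _ => g P) x) ^ q) ^ (1/q)) ^ p₁
            ≤ A ^ (r-1) * ∑' P : Shear.Index d,
                (Shear.shearQ P).indicator
                  (fun _ => g P ^ p₁
                    * ENNReal.ofReal (Shear.cubeVol P ^ (-(γ*(r-1))))) x := by
        intro x
        set u : Shear.Index d → ℝ≥0∞ :=
          fun P => g P ^ q * ENNReal.ofReal (Shear.cubeVol P ^ (-(γ/r'))) with hu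
        set v : Shear.Index d → ℝ≥0∞ :=
          fun P => ENNReal.ofReal (Shear.cubeVol P ^ (γ/r')) with hv
        have huv : ∀ P, u P * v P = g P ^ q := by
          intro P
          rw [hu, hv]
          simp only
          rw [mul_assoc,
            ← ENNReal.ofReal_mul (Real.rpow_pos_of_pos (Shear.cubeVol_pos P) _).le,
            ← Real.rpow_add (Shear.cubeVol_pos P), neg_add_cancel, Real.rpow_zero,
            ENNReal.ofReal_one, mul_one]
        have hHolder : (∑' P : Shear.Index d, ((Shear.shearQ P).indicator (fun _ => g P) x) ^ q)
            ≤ (∑' P : Shear.Index d, ((Shear.shearQ P).indicator (fun _ => u P) x) ^ r) ^ (1/r)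
              * (∑' P : Shear.Index d,
                  ((Shear.shearQ P).indicator (fun _ => v P) x) ^ r') ^ (1/r') := by
          have h1 : ∀ P : Shear.Index d,
              ((Shear.shearQ P).indicator (fun _ => g P) x) ^ q
                = ((fun P => (Shear.shearQ P).indicator (fun _ => u P) x)
                    * (fun P => (Shear.shearQ P).indicator (fun _ => v P) x)) P := by
            intro P
            simp only [Pi.mul_apply]
            rw [Shear.indicator_mul_indicator, huv, Shear.indicator_rpow _ _ _ hq0]
          calc (∑' P : Shear.Index d, ((Shear.shearQ P).indicator (fun _ => g P) x) ^ q)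
              = ∫⁻ P : Shear.Index d,
                  ((fun P => (Shear.shearQ P).indicator (fun _ => u P) x)
                    * (fun P => (Shear.shearQ P).indicator (fun _ => v P) x)) P
                  ∂Measure.count := by
                rw [MeasureTheory.lintegral_count]
                exact tsum_congr h1
            _ ≤ (∫⁻ P : Shear.Index d, ((Shear.shearQ P).indicator (fun _ => u P) x) ^ r
                  ∂Measure.count) ^ (1/r)
                * (∫⁻ P : Shear.Index d, ((Shear.shearQ P).indicator (fun _ => v P) x) ^ r'
                  ∂Measure.count) ^ (1/r') :=
                ENNReal.lintegral_mul_le_Lp_mul_Lq _ hconj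
                  measurable_from_top.aemeasurable measurable_from_top.aemeasurable
            _ = (∑' P : Shear.Index d, ((Shear.shearQ P).indicator (fun _ => u P) x) ^ r) ^ (1/r)
                * (∑' P : Shear.Index d,
                    ((Shear.shearQ P).indicator (fun _ => v P) x) ^ r') ^ (1/r') := by
                rw [MeasureTheory.lintegral_count, MeasureTheory.lintegral_count]
        have hv_bound : (∑' P : Shear.Index d,
            ((Shear.shearQ P).indicator (fun _ => v P) x) ^ r') ≤ A := by
          have h2 : ∀ P : Shear.Index d,
              ((Shear.shearQ P).indicator (fun _ => v P) x) ^ r'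
                = ENNReal.ofReal (Shear.cubeVol P ^ γ)
                    * (Shear.shearQ P).indicator (fun _ => (1:ℝ≥0∞)) x := by
            intro P
            rw [Shear.indicator_rpow _ _ _ hr'0, hv]
            simp only
            rw [ENNReal.ofReal_rpow_of_pos (Real.rpow_pos_of_pos (Shear.cubeVol_pos P) _),
              ← Real.rpow_mul (Shear.cubeVol_pos P).le, div_mul_cancel₀ _ hr'0.ne']
            by_cases hx : x ∈ Shear.shearQ P <;> simp [hx]
          rw [tsum_congr h2]
          exact hA x
        have hu_pow : ∀ P : Shear.Index d,
            ((Shear.shearQ P).indicator (fun _ => u P) x) ^ r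
              = (Shear.shearQ P).indicator
                  (fun _ => g P ^ p₁
                    * ENNReal.ofReal (Shear.cubeVol P ^ (-(γ*(r-1))))) x := by
          intro P
          rw [Shear.indicator_rpow _ _ _ hr0, hu]
          simp only
          rw [ENNReal.mul_rpow_of_nonneg _ _ hr0.le, ← ENNReal.rpow_mul,
            show q * r = p₁ from by rw [hrdef]; field_simp,
            ENNReal.ofReal_rpow_of_pos (Real.rpow_pos_of_pos (Shear.cubeVol_pos P) _),
            ← Real.rpow_mul (Shear.cubeVol_pos P).le,
            show -(γ/r') * r = -(γ*(r-1)) from by rw [hr'def]; field_simp]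
        calc ((∑' P : Shear.Index d, ((Shear.shearQ P).indicator (fun _ => g P) x) ^ q)
                ^ (1/q)) ^ p₁
            = (∑' P : Shear.Index d, ((Shear.shearQ P).indicator (fun _ => g P) x) ^ q) ^ r := by
              rw [← ENNReal.rpow_mul]
              congr 1
              rw [hrdef]
              ring
          _ ≤ ((∑' P : Shear.Index d, ((Shear.shearQ P).indicator (fun _ => u P) x) ^ r) ^ (1/r)
                * (∑' P : Shear.Index d,
                    ((Shear.shearQ P).indicator (fun _ => v P) x) ^ r') ^ (1/r')) ^ r :=
              ENNReal.rpow_le_rpow hHolder hr0.le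
          _ = (∑' P : Shear.Index d, ((Shear.shearQ P).indicator (fun _ => u P) x) ^ r)
                * ((∑' P : Shear.Index d,
                    ((Shear.shearQ P).indicator (fun _ => v P) x) ^ r') ^ (1/r')) ^ r := by
              rw [ENNReal.mul_rpow_of_nonneg _ _ hr0.le, ← ENNReal.rpow_mul, one_div,
                inv_mul_cancel₀ hr0.ne', ENNReal.rpow_one]
          _ ≤ (∑' P : Shear.Index d, ((Shear.shearQ P).indicator (fun _ => u P) x) ^ r)
                * (A ^ (1/r')) ^ r := by
              gcongr
          _ = A ^ (r-1) * (∑' P : Shear.Index d,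
                ((Shear.shearQ P).indicator (fun _ => u P) x) ^ r) := by
              rw [← ENNReal.rpow_mul, mul_comm,
                show 1/r' * r = r - 1 from by rw [hr'def]; field_simp]
          _ = A ^ (r-1) * ∑' P : Shear.Index d,
                (Shear.shearQ P).indicator
                  (fun _ => g P ^ p₁
                    * ENNReal.ofReal (Shear.cubeVol P ^ (-(γ*(r-1))))) x := by
              rw [tsum_congr hu_pow]
      -- main integral bound
      simp only [ENNReal.ofReal_one, one_mul, Shear.tlNorm, if_neg hqt]
      have hmain : (∫⁻ x : Fin d → ℝ, ((∑' P : Shear.Index d,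
              (ENNReal.ofReal (Shear.cubeVol P ^ (-s₁ - 1 / 2)) *
                (‖Set.indicator Γ
                  (fun P => ((Shear.cubeVol P ^ (s₂ - 1/p₂ + 1/2) : ℝ) : ℂ)) P‖₊ : ℝ≥0∞) *
                (Shear.shearQ P).indicator (fun _ => (1:ℝ≥0∞)) x) ^ q₁.toReal)
              ^ (1/q₁.toReal)) ^ p₁)
          ≤ A ^ (r-1) * Shear.nu β Γ := by
        calc (∫⁻ x : Fin d → ℝ, ((∑' P : Shear.Index d,
              (ENNReal.ofReal (Shear.cubeVol P ^ (-s₁ - 1 / 2)) *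
                (‖Set.indicator Γ
                  (fun P => ((Shear.cubeVol P ^ (s₂ - 1/p₂ + 1/2) : ℝ) : ℂ)) P‖₊ : ℝ≥0∞) *
                (Shear.shearQ P).indicator (fun _ => (1:ℝ≥0∞)) x) ^ q₁.toReal)
              ^ (1/q₁.toReal)) ^ p₁)
            ≤ ∫⁻ x : Fin d → ℝ, A ^ (r-1) * ∑' P : Shear.Index d,
                (Shear.shearQ P).indicator
                  (fun _ => g P ^ p₁
                    * ENNReal.ofReal (Shear.cubeVol P ^ (-(γ*(r-1))))) x := by
              apply lintegral_mono
              intro x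
              simp only [Shear.term_eq Γ s₁ s₂ p₂]
              exact hpoint x
          _ = A ^ (r-1) * ∫⁻ x : Fin d → ℝ, ∑' P : Shear.Index d,
                (Shear.shearQ P).indicator
                  (fun _ => g P ^ p₁
                    * ENNReal.ofReal (Shear.cubeVol P ^ (-(γ*(r-1))))) x :=
              lintegral_const_mul' _ _ hArm1
          _ = A ^ (r-1) * ∑' P : Shear.Index d,
                g P ^ p₁ * ENNReal.ofReal (Shear.cubeVol P ^ (-(γ*(r-1))))
                  * ENNReal.ofReal (Shear.cubeVol P) := by
              rw [Shear.lintegral_tsum_indicator]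
          _ ≤ A ^ (r-1) * Shear.nu β Γ := by
              gcongr
              calc (∑' P : Shear.Index d,
                    g P ^ p₁ * ENNReal.ofReal (Shear.cubeVol P ^ (-(γ*(r-1))))
                      * ENNReal.ofReal (Shear.cubeVol P))
                  ≤ ∑' P : Shear.Index d, Γ.indicator
                      (fun P => ENNReal.ofReal
                        (Shear.cubeVol P ^ (δ * p₁ - γ*(r-1) + 1))) P := by
                    refine ENNReal.tsum_le_tsum fun P => ?_
                    by_cases hP : P ∈ Γ
                    · simp only [hg, Set.indicator_of_mem hP]
                      have hpos := Shear.cubeVol_pos P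
                      rw [ENNReal.ofReal_rpow_of_pos (Real.rpow_pos_of_pos hpos _),
                        ← ENNReal.ofReal_mul
                          (Real.rpow_pos_of_pos (Real.rpow_pos_of_pos hpos δ) p₁).le,
                        ← ENNReal.ofReal_mul
                          (mul_pos (Real.rpow_pos_of_pos (Real.rpow_pos_of_pos hpos δ) p₁)
                            (Real.rpow_pos_of_pos hpos _)).le]
                      apply ENNReal.ofReal_le_ofReal
                      apply le_of_eq
                      calc (Shear.cubeVol P ^ δ) ^ p₁
                              * Shear.cubeVol P ^ (-(γ*(r-1))) * Shear.cubeVol P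
                          = Shear.cubeVol P ^ (δ*p₁) * Shear.cubeVol P ^ (-(γ*(r-1)))
                              * Shear.cubeVol P ^ (1:ℝ) := by
                            rw [← Real.rpow_mul hpos.le, Real.rpow_one]
                        _ = Shear.cubeVol P ^ (δ*p₁ + -(γ*(r-1)) + 1) := by
                            rw [← Real.rpow_add hpos, ← Real.rpow_add hpos]
                        _ = Shear.cubeVol P ^ (δ*p₁ - γ*(r-1) + 1) := by ring_nf
                    · simp [hg, Set.indicator_of_notMem hP, ENNReal.zero_rpow_of_pos hp₁]
                _ ≤ Shear.nu β Γ := Shear.tsum_indicator_le_nu Γ hβle2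
      refine le_trans (ENNReal.rpow_le_rpow hmain (by positivity)) ?_
      rw [ENNReal.mul_rpow_of_nonneg _ _ (by positivity)]
      exact mul_le_mul_left hofC _
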